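/- Let I_n = [n!, (n+1)!) and 𝓘(A) = ⋃_{n ∈ A} I_n. For any infinite A ⊆ ℕ, any set D ⊆ ℕ of positive lower density intersects I_n for all but finitely many n. Consequently, if A is noncomputable, then the partial computability bound α(𝓘(A)) = 0. -/

import Mathlib

open Filter Topology
open scoped symmDiff Classical

/-- ρ_n(A): the density of A below n. -/
noncomputable def partialDensity (A : Set ℕ) (n : ℕ) : ℝ :=
  ((Finset.range n).filter (fun k => k ∈ A)).card / n

/-- Lower density ρ̲(A). -/
noncomputable def lowerDensity (A : Set ℕ) : ℝ := liminf (partialDensity A) atTop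

/-- Upper density ρ̄(A). -/
noncomputable def upperDensity (A : Set ℕ) : ℝ := limsup (partialDensity A) atTop

/-- A has density r. -/
def HasDensity (A : Set ℕ) (r : ℝ) : Prop := Tendsto (partialDensity A) atTop (𝓝 r)

/-- A set of naturals is computable. -/
def IsComputableSet (A : Set ℕ) : Prop := ComputablePred (· ∈ A)

/-- A is coarsely computable at density r. -/
def CoarselyComputableAt (A : Set ℕ) (r : ℝ) : Prop :=
  ∃ C : Set ℕ, IsComputableSet C ∧ r ≤ lowerDensity {n | n ∈ A ↔ n ∈ C}

/-- γ(A), the coarse computability bound. -/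
noncomputable def gammaBound (A : Set ℕ) : ℝ := sSup {r | CoarselyComputableAt A r}

/-- A is partially computable at density r. -/
def PartiallyComputableAt (A : Set ℕ) (r : ℝ) : Prop :=
  ∃ φ : ℕ →. Bool, Partrec φ ∧ (∀ n b, b ∈ φ n → (b = true ↔ n ∈ A)) ∧
    r ≤ lowerDensity φ.Dom

/-- α(A), the partial computability bound. -/
noncomputable def alphaBound (A : Set ℕ) : ℝ := sSup {r | PartiallyComputableAt A r}

/-- A is generically computable. -/
def GenericallyComputable (A : Set ℕ) : Prop := PartiallyComputableAt A 1

/-- A is coarsely computable. -/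
def CoarselyComputable (A : Set ℕ) : Prop :=
  ∃ C : Set ℕ, IsComputableSet C ∧ HasDensity (A ∆ C) 0

/-- 𝓘(A) = ⋃_{n ∈ A} [n!, (n+1)!). -/
def calI (A : Set ℕ) : Set ℕ := ⋃ n ∈ A, Set.Ico (Nat.factorial n) (Nat.factorial (n + 1))

lemma partialDensity_nonneg (A : Set ℕ) (n : ℕ) : 0 ≤ partialDensity A n := by
  unfold partialDensity
  positivity

lemma mem_calI_iff (A : Set ℕ) {n k : ℕ} (h1 : n.factorial ≤ k) (h2 : k < (n+1).factorial) :
    k ∈ calI A ↔ n ∈ A := by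
  constructor
  · intro hk
    rw [calI, Set.mem_iUnion₂] at hk
    obtain ⟨m, hm, hk1, hk2⟩ := hk
    have : m = n := by
      by_contra hne
      rcases Nat.lt_or_ge m n with hlt | hge
      · have : (m+1).factorial ≤ n.factorial := Nat.factorial_le hlt
        omega
      · have hgt : n < m := by omega
        have : (n+1).factorial ≤ m.factorial := Nat.factorial_le hgt
        omega
    exact this ▸ hm
  · intro hn
    rw [calI, Set.mem_iUnion₂]
    exact ⟨n, hn, h1, h2⟩

lemma part1 (D : Set ℕ) (hD : 0 < lowerDensity D) :
    ∀ᶠ n in Filter.atTop, (D ∩ Set.Ico (Nat.factorial n) (Nat.factorial (n + 1))).Nonempty := by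
  by_contra h
  rw [Filter.not_eventually] at h
  have hbd : Filter.IsBoundedUnder (· ≥ ·) atTop (partialDensity D) :=
    Filter.isBoundedUnder_of ⟨0, fun n => partialDensity_nonneg D n⟩
  have key : ∀ ε : ℝ, 0 < ε → lowerDensity D ≤ ε := by
    intro ε hε
    refine Filter.liminf_le_of_frequently_le ?_ hbd
    rw [Filter.frequently_atTop]
    intro M
    obtain ⟨n, hn, hne⟩ := (Filter.frequently_atTop.mp h) (max M ⌈1/ε⌉₊)
    have hempty : D ∩ Set.Ico n.factorial (n+1).factorial = ∅ :=
      Set.not_nonempty_iff_eq_empty.mp hne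
    refine ⟨(n+1).factorial, ?_, ?_⟩
    · calc M ≤ n := le_trans (le_max_left _ _) hn
        _ ≤ (n+1).factorial := le_trans (Nat.le_succ n) (Nat.self_le_factorial _)
    · have hsub : (Finset.range ((n+1).factorial)).filter (fun k => k ∈ D) ⊆
          Finset.range n.factorial := by
        intro k hk
        simp only [Finset.mem_filter, Finset.mem_range] at hk ⊢
        by_contra hge
        push_neg at hge
        have : k ∈ D ∩ Set.Ico n.factorial (n+1).factorial := ⟨hk.2, hge, hk.1⟩
        rw [hempty] at this
        exact this
      have hcard : ((Finset.range ((n+1).factorial)).filter (fun k => k ∈ D)).card ≤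
          n.factorial := by
        simpa using Finset.card_le_card hsub
      have hfactpos : (0:ℝ) < ((n+1).factorial : ℝ) := by
        exact_mod_cast Nat.factorial_pos _
      have hfactpos' : (0:ℝ) < (n.factorial : ℝ) := by
        exact_mod_cast Nat.factorial_pos _
      have h1 : partialDensity D ((n+1).factorial) ≤
          (n.factorial : ℝ) / ((n+1).factorial : ℝ) := by
        unfold partialDensity
        gcongr
      have h2 : (n.factorial : ℝ) / ((n+1).factorial : ℝ) = 1/((n:ℝ)+1) := by
        rw [Nat.factorial_succ]
        push_cast
        rw [mul_comm]
        rw [div_mul_eq_div_div]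
        rw [div_self hfactpos'.ne']
      have h4 : (1:ℝ)/ε ≤ (n:ℝ)+1 := by
        have : ⌈1/ε⌉₊ ≤ n := le_trans (le_max_right _ _) hn
        calc (1:ℝ)/ε ≤ ⌈1/ε⌉₊ := Nat.le_ceil _
          _ ≤ (n:ℝ) := by exact_mod_cast this
          _ ≤ (n:ℝ)+1 := by linarith
      have h5 : (1:ℝ)/((n:ℝ)+1) ≤ ε := by
        have h6 : 1 ≤ ((n:ℝ)+1)*ε := by
          rw [div_le_iff₀ hε] at h4
          linarith
        rw [div_le_iff₀ (by positivity)]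
        linarith
      calc partialDensity D ((n+1).factorial) ≤ _ := h1
        _ = 1/((n:ℝ)+1) := h2
        _ ≤ ε := h5
  have : lowerDensity D ≤ 0 := by
    refine le_of_forall_pos_le_add fun ε hε => ?_
    simpa using key ε hε
  linarith

lemma primrec_factorial : Primrec Nat.factorial := by
  have h : Primrec (fun n => Nat.rec (motive := fun _ => ℕ) 1 (fun k ih => (k+1) * ih) n) :=
    Primrec.nat_rec₁ 1 ((Primrec.nat_mul.comp (Primrec.succ.comp Primrec.fst) Primrec.snd).to₂)
  refine h.of_eq fun n => ?_
  induction n with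
  | zero => rfl
  | succ k ih => simp [Nat.factorial_succ, ih]

lemma computable_of_partial (A : Set ℕ) (φ : ℕ →. Bool) (hφ : Partrec φ)
    (hcor : ∀ n b, b ∈ φ n → (b = true ↔ n ∈ calI A)) (N : ℕ)
    (hdom : ∀ n, N ≤ n → ∃ k, k ∈ φ.Dom ∧ k ∈ Set.Ico (Nat.factorial n) (Nat.factorial (n+1))) :
    IsComputableSet A := by
  classical
  -- step 1: get a code for φ
  have h1 : Nat.Partrec fun n => (φ n).map Encodable.encode := by
    refine Nat.Partrec.of_eq hφ fun n => ?_
    simp [Encodable.decode]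
  obtain ⟨c, hc⟩ := Nat.Partrec.Code.exists_code.1 h1
  -- step 2: the search function
  set g : ℕ → ℕ → Option Bool := fun n s =>
    if Nat.factorial n ≤ s.unpair.2 ∧ s.unpair.2 < Nat.factorial (n+1) then
      (Nat.Partrec.Code.evaln s.unpair.1 c s.unpair.2).bind (fun v => Encodable.decode v)
    else none with hg_def
  have hg : Computable₂ g := by
    have hk : Primrec (fun p : ℕ × ℕ => p.2.unpair.2) :=
      Primrec.snd.comp (Primrec.unpair.comp Primrec.snd)
    have hfuel : Primrec (fun p : ℕ × ℕ => p.2.unpair.1) :=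
      Primrec.fst.comp (Primrec.unpair.comp Primrec.snd)
    have hcond : PrimrecPred (fun p : ℕ × ℕ =>
        Nat.factorial p.1 ≤ p.2.unpair.2 ∧ p.2.unpair.2 < Nat.factorial (p.1+1)) :=
      PrimrecPred.and
        (Primrec.nat_le.comp (primrec_factorial.comp Primrec.fst) hk)
        (Primrec.nat_lt.comp hk (primrec_factorial.comp (Primrec.succ.comp Primrec.fst)))
    have heval : Primrec (fun p : ℕ × ℕ =>
        Nat.Partrec.Code.evaln p.2.unpair.1 c p.2.unpair.2) :=
      Nat.Partrec.Code.primrec_evaln.comp ((hfuel.pair (Primrec.const c)).pair hk)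
    have hbody : Primrec (fun p : ℕ × ℕ =>
        (Nat.Partrec.Code.evaln p.2.unpair.1 c p.2.unpair.2).bind
          (fun v => (Encodable.decode v : Option Bool))) :=
      Primrec.option_bind heval ((Primrec.decode.comp Primrec.snd).to₂)
    exact (Primrec.ite hcond hbody (Primrec.const none)).to_comp.to₂
  set ψ : ℕ →. Bool := fun n => Nat.rfindOpt (g n) with hψ_def
  have hψ : Partrec ψ := Partrec.rfindOpt hg
  -- correctness of ψ
  have hψcor : ∀ n b, b ∈ ψ n → (b = true ↔ n ∈ A) := by
    intro n b hb
    obtain ⟨s, hs⟩ := Nat.rfindOpt_spec hb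
    rw [hg_def] at hs
    simp only at hs
    split_ifs at hs with hcnd
    · obtain ⟨v, hv, hdec⟩ := Option.bind_eq_some_iff.mp hs
      have hvmem : v ∈ Nat.Partrec.Code.eval c s.unpair.2 :=
        Nat.Partrec.Code.evaln_sound hv
      rw [hc] at hvmem
      obtain ⟨b0, hb0, hb0v⟩ := Part.mem_map_iff _ |>.mp hvmem
      have : b = b0 := by
        rw [← hb0v, Encodable.encodek] at hdec
        exact (Option.some_inj.mp hdec).symm
      subst this
      have := hcor _ _ hb0
      rw [this, mem_calI_iff A hcnd.1 hcnd.2]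
    · simp at hs
  -- ψ is total above N
  have hψdom : ∀ n, N ≤ n → (ψ n).Dom := by
    intro n hn
    obtain ⟨k, hk, hk1, hk2⟩ := hdom n hn
    obtain ⟨b, hb⟩ := Part.dom_iff_mem.mp hk
    have : Encodable.encode b ∈ Nat.Partrec.Code.eval c k := by
      rw [hc]
      exact Part.mem_map_iff _ |>.mpr ⟨b, hb, rfl⟩
    obtain ⟨fuel, hfuel⟩ := Nat.Partrec.Code.evaln_complete.mp this
    apply Nat.rfindOpt_dom.2
    refine ⟨Nat.pair fuel k, b, ?_⟩
    rw [hg_def]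
    simp only [Nat.unpair_pair]
    rw [if_pos ⟨hk1, hk2⟩]
    rw [Option.mem_def] at hfuel
    rw [hfuel]
    simp [Encodable.encodek]
  -- totalized function above N
  set g2 : ℕ → Bool := fun m => decide ((m + N) ∈ A) with hg2_def
  have hg2 : Computable g2 := by
    have hadd : Computable (fun m : ℕ => m + N) :=
      (Primrec.nat_add.comp Primrec.id (Primrec.const N)).to_comp
    refine Partrec.of_eq_tot (hψ.comp hadd) fun m => ?_
    have hd := hψdom (m + N) (Nat.le_add_left _ _)
    have hmem := Part.get_mem hd
    have hiff := hψcor _ _ hmem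
    have : (ψ (m + N)).get hd = decide ((m + N) ∈ A) := by
      by_cases hA : (m + N) ∈ A <;> simp [hA] at hiff ⊢ <;> simp [hiff]
    show decide ((m + N) ∈ A) ∈ ψ (m + N)
    rw [this] at hmem
    exact hmem
  -- the full decision function
  set L : List Bool := (List.range N).map (fun i => decide (i ∈ A)) with hL_def
  set f : ℕ → Bool := fun n => if n < N then L.getD n false else g2 (n - N) with hf_def
  have hf : Computable f := by
    have h1 : Primrec (fun n : ℕ => L.getD n false) :=
      (Primrec.list_getD false).comp (Primrec.const L) Primrec.id
    have h2 : Computable (fun n : ℕ => g2 (n - N)) :=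
      hg2.comp (Primrec.nat_sub.comp Primrec.id (Primrec.const N)).to_comp
    exact Computable.of_eq
      (Computable.cond ((Primrec.nat_lt.comp Primrec.id (Primrec.const N)).decide.to_comp)
        h1.to_comp h2)
      (fun n => by by_cases h : n < N <;> simp [hf_def, h])
  have hfeq : ∀ n, f n = decide (n ∈ A) := by
    intro n
    simp only [hf_def]
    split_ifs with hn
    · rw [hL_def]
      simp [List.getD_eq_getElem?_getD, hn]
    · rw [hg2_def]
      have h7 : n - N + N = n := by omega
      simp only [h7]
  rw [IsComputableSet]
  rw [ComputablePred.computable_iff]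
  refine ⟨f, hf, ?_⟩
  funext n
  rw [hfeq n]
  simp

theorem alphaBound_calI_eq_zero :
    (∀ D : Set ℕ, 0 < lowerDensity D →
      ∀ᶠ n in Filter.atTop, (D ∩ Set.Ico (Nat.factorial n) (Nat.factorial (n + 1))).Nonempty) ∧
    (∀ A : Set ℕ, ¬ IsComputableSet A → alphaBound (calI A) = 0) := by
  refine ⟨part1, ?_⟩
  intro A hA
  have hle : ∀ r ∈ {r | PartiallyComputableAt (calI A) r}, r ≤ 0 := by
    intro r hr
    by_contra hrpos
    push_neg at hrpos
    obtain ⟨φ, hφ, hcor, hld⟩ := hr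
    have hpos : 0 < lowerDensity φ.Dom := lt_of_lt_of_le hrpos hld
    obtain ⟨N, hN⟩ := Filter.eventually_atTop.mp (part1 φ.Dom hpos)
    exact hA (computable_of_partial A φ hφ hcor N (fun n hn => by
      obtain ⟨k, hk⟩ := hN n hn
      exact ⟨k, hk.1, hk.2⟩))
  have h0 : PartiallyComputableAt (calI A) 0 := by
    refine ⟨fun _ => Part.none, Partrec.none, fun n b hb => absurd hb (Part.notMem_none b), ?_⟩
    have hpd : partialDensity (PFun.Dom fun _ : ℕ => (Part.none : Part Bool)) = fun _ => 0 := by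
      funext n
      unfold partialDensity
      rw [Finset.filter_false_of_mem, Finset.card_empty]
      · simp
      · intro k _
        simp [PFun.mem_dom]
    rw [lowerDensity, hpd, Filter.liminf_const]
  apply le_antisymm
  · exact Real.sSup_le hle le_rfl
  · exact le_csSup ⟨0, hle⟩ h0
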